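/- The pullback of two-form-type vector fields is compatible with the cross product of one-form-type pullbacks: if ℰ = Fᵀ e and ℬ = J F⁻¹ b for an invertible F with J = det F, and 𝒱 = −F⁻¹ v, then 𝒱 × ℬ = −Fᵀ (v × b). -/
import Mathlib
open Matrix

lemma cross_mulVec (M : Matrix (Fin 3) (Fin 3) ℝ) (a c : Fin 3 → ℝ) :
    crossProduct (M.mulVec a) (M.mulVec c)
      = M.adjugate.transpose.mulVec (crossProduct a c) := by
  funext i
  fin_cases i <;>
    simp [crossProduct, mulVec, dotProduct, Fin.sum_univ_three, adjugate_fin_three,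
      Matrix.transpose_apply] <;> ring

theorem stmt_7 (F : Matrix (Fin 3) (Fin 3) ℝ) (hF : IsUnit F.det)
    (v b 𝒱 ℬ : Fin 3 → ℝ)
    (h𝒱 : 𝒱 = -(F⁻¹.mulVec v))
    (hℬ : ℬ = F.det • F⁻¹.mulVec b) :
    crossProduct 𝒱 ℬ = -(F.transpose.mulVec (crossProduct v b)) := by
  have hd : F.det ≠ 0 := hF.ne_zero
  subst h𝒱 hℬ
  have hadj : (F⁻¹).adjugate = (F.det)⁻¹ • F := by
    have h1 : (F⁻¹)⁻¹ = Ring.inverse (F⁻¹).det • (F⁻¹).adjugate := Matrix.inv_def _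
    rw [Matrix.nonsing_inv_nonsing_inv F hF, Matrix.det_nonsing_inv] at h1
    simp only [Ring.inverse_eq_inv, inv_inv] at h1
    have := congrArg (fun M => (F.det)⁻¹ • M) h1
    simpa [smul_smul, inv_mul_cancel₀ hd] using this.symm
  have key := cross_mulVec F⁻¹ v b
  have hstep : crossProduct (-(F⁻¹.mulVec v)) (F.det • F⁻¹.mulVec b)
      = -(F.det • crossProduct (F⁻¹.mulVec v) (F⁻¹.mulVec b)) := by
    rw [map_neg, LinearMap.neg_apply, LinearMap.map_smul]
  rw [hstep, key, hadj]
  simp [Matrix.transpose_smul, Matrix.smul_mulVec, smul_smul,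
    mul_inv_cancel₀ hd]
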